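/- arXiv:0707.2505 — 4 statements merged into one kernel-verified Lean document; each statement's English description precedes it below -/
import Mathlib

section
/- Let φ(z) = z² + z and let α ∈ ℚ with α > 0. Write φⁿ(α) = Aₙ/Bₙ in lowest terms with Aₙ, Bₙ > 0. Then for every n ≥ 1, Aₙ has a primitive prime divisor: there exists a prime p with p ∣ Aₙ and p ∤ Aᵢ for all 0 ≤ i < n. In other words, the Zsigmondy set of (Aₙ) is empty. -/
private lemma step_num (q : ℚ) : (q ^ 2 + q).num = q.num * (q.num + q.den) := by
  have hd : (0:ℤ) < (q.den : ℤ) ^ 2 := by positivity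
  have hcop : IsCoprime q.num (q.den : ℤ) := by
    rw [Int.isCoprime_iff_gcd_eq_one]; exact q.reduced
  have hcop2 : IsCoprime (q.num * (q.num + (q.den : ℤ))) ((q.den : ℤ) ^ 2) := by
    have h1 : IsCoprime (q.num + (q.den : ℤ)) (q.den : ℤ) := by
      have := hcop.add_mul_left_left 1
      simpa using this
    exact (hcop.mul_left h1).pow_right
  have hq : q ^ 2 + q = ((q.num * (q.num + (q.den : ℤ)) : ℤ) : ℚ) / (((q.den : ℤ) ^ 2 : ℤ) : ℚ) := by
    have hden : ((q.den : ℚ)) ≠ 0 := by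
      exact_mod_cast q.den_nz
    have hqn : (q.num : ℚ) = q * (q.den : ℚ) := by
      exact (div_eq_iff hden).mp (Rat.num_div_den q)
    rw [eq_div_iff (by positivity)]
    push_cast
    rw [hqn]
    ring
  rw [hq, Rat.num_div_eq_of_coprime hd (Int.isCoprime_iff_gcd_eq_one.mp hcop2)]

private lemma step_pos (q : ℚ) (hq : 0 < q) : 0 < q ^ 2 + q := by positivity

theorem stmt2 (α : ℚ) (hα : 0 < α) (n : ℕ) (hn : 1 ≤ n) :
    ∃ p : ℕ, p.Prime ∧ (p : ℤ) ∣ ((fun z : ℚ => z ^ 2 + z)^[n] α).num ∧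
      ∀ i < n, ¬ (p : ℤ) ∣ ((fun z : ℚ => z ^ 2 + z)^[i] α).num := by
  set f : ℚ → ℚ := fun z => z ^ 2 + z with hf
  have hpos : ∀ k, 0 < f^[k] α := by
    intro k
    induction k with
    | zero => simpa [hf] using hα
    | succ k ih =>
      rw [Function.iterate_succ_apply']
      exact step_pos _ ih
  have hnumpos : ∀ k, 0 < (f^[k] α).num := fun k => Rat.num_pos.mpr (hpos k)
  have hrec : ∀ k, (f^[k+1] α).num
      = (f^[k] α).num * ((f^[k] α).num + ((f^[k] α).den : ℤ)) := by
    intro k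
    rw [Function.iterate_succ_apply']
    exact step_num _
  have hdvd : ∀ i j, i ≤ j → (f^[i] α).num ∣ (f^[j] α).num := by
    intro i j hij
    induction j with
    | zero => simpa [Nat.le_zero.mp hij] using dvd_refl _
    | succ j ih =>
      rcases Nat.eq_or_lt_of_le hij with h | h
      · rw [h]
      · exact (ih (Nat.lt_succ_iff.mp h)).trans (by rw [hrec]; exact dvd_mul_right _ _)
  obtain ⟨m, rfl⟩ : ∃ m, n = m + 1 := ⟨n - 1, (Nat.succ_pred_eq_of_pos hn).symm⟩
  set C : ℤ := (f^[m] α).num + ((f^[m] α).den : ℤ) with hC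
  have hC2 : 2 ≤ C := by
    have h1 : 1 ≤ (f^[m] α).num := hnumpos m
    have h2 : 1 ≤ ((f^[m] α).den : ℤ) := by exact_mod_cast (f^[m] α).pos
    omega
  set p := C.natAbs.minFac with hp
  have hppr : p.Prime := Nat.minFac_prime (by omega)
  have hpC : (p : ℤ) ∣ C := by
    have := C.natAbs.minFac_dvd
    exact (Int.natCast_dvd_natCast.mpr this).trans (Int.natAbs_dvd.mpr dvd_rfl)
  refine ⟨p, hppr, ?_, ?_⟩
  · rw [hrec m]
    exact Dvd.dvd.mul_left hpC _
  · intro i hi hdvdi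
    have h1 : (p : ℤ) ∣ (f^[m] α).num :=
      dvd_trans hdvdi (hdvd i m (Nat.lt_succ_iff.mp hi))
    have h2 : (p : ℤ) ∣ ((f^[m] α).den : ℤ) := by
      have := dvd_sub hpC h1
      simp only [hC, add_sub_cancel_left] at this; exact this
    have : (p : ℤ) ∣ 1 := by
      have hcop : IsCoprime (f^[m] α).num (((f^[m] α).den : ℤ)) := by
        rw [Int.isCoprime_iff_gcd_eq_one]; exact (f^[m] α).reduced
      exact isUnit_iff_dvd_one.mp (hcop.isUnit_of_dvd' h1 h2)
    have := Int.le_of_dvd one_pos this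
    have := hppr.two_le
    omega
end

section
/- Let d ≥ 2 and let F(z) ∈ ℤ[z] be a polynomial of degree at most d with F(0) = 1, and set φ(z) = z^d / F(z) as a rational function. Let α = A₁/B₁ ∈ ℚ be in lowest terms with φⁿ(α) defined and nonzero for all n, and write φⁿ(α) = Aₙ/Bₙ in lowest terms. Then the set of primes dividing Aₙ equals the set of primes dividing A₁ for all n ≥ 1; in particular Aₙ has no primitive prime divisor for any n ≥ 2. -/
lemma stmt3_key (d : ℕ) (hd : 1 ≤ d) (F : Polynomial ℤ)
    (hdeg : F.natDegree ≤ d) (hF0 : F.coeff 0 = 1)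
    (x : ℚ) (hx : x ≠ 0) (hFx : Polynomial.aeval x F ≠ 0)
    (p : ℕ) (hp : p.Prime) :
    ((p : ℤ) ∣ (x ^ d / Polynomial.aeval x F).num ↔ (p : ℤ) ∣ x.num) := by
  set a : ℤ := x.num with ha
  set b : ℤ := (x.den : ℤ) with hb
  have hbne : b ≠ 0 := by simp [hb, x.den_nz]
  have hbq : (b : ℚ) ≠ 0 := by exact_mod_cast hbne
  have hxab : (a : ℚ) = x * b := by
    rw [← Rat.num_div_den x, hb]
    push_cast
    field_simp
    rw [ha]
  set G : ℤ := ∑ i ∈ Finset.range (d + 1), F.coeff i * a ^ i * b ^ (d - i) with hGdef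
  have hG : (G : ℚ) = Polynomial.aeval x F * (b : ℚ) ^ d := by
    have heval : Polynomial.aeval x F =
        ∑ i ∈ Finset.range (d + 1), (algebraMap ℤ ℚ) (F.coeff i) * x ^ i :=
      Polynomial.eval₂_eq_sum_range' (algebraMap ℤ ℚ)
        (lt_of_le_of_lt hdeg (Nat.lt_succ_self d)) x
    rw [heval, Finset.sum_mul]
    push_cast [hGdef]
    refine Finset.sum_congr rfl ?_
    intro i hi
    have hi' : i ≤ d := Nat.lt_succ_iff.mp (Finset.mem_range.mp hi)
    simp only [algebraMap_int_eq, eq_intCast]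
    calc (F.coeff i : ℚ) * (a : ℚ) ^ i * (b : ℚ) ^ (d - i)
        = (F.coeff i : ℚ) * (x * (b : ℚ)) ^ i * (b : ℚ) ^ (d - i) := by rw [← hxab]
      _ = (F.coeff i : ℚ) * x ^ i * ((b : ℚ) ^ (i + (d - i))) := by
          rw [pow_add]; ring
      _ = (F.coeff i : ℚ) * x ^ i * (b : ℚ) ^ d := by rw [Nat.add_sub_cancel' hi']
  have hGmod : a ∣ G - b ^ d := by
    have h5 : G = (∑ i ∈ Finset.range d, F.coeff (i+1) * a ^ (i+1) * b ^ (d - (i+1)))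
        + F.coeff 0 * a ^ 0 * b ^ (d - 0) := Finset.sum_range_succ' _ d
    rw [h5, hF0]
    simp only [pow_zero, one_mul, Nat.sub_zero, add_sub_cancel_right]
    refine Finset.dvd_sum ?_
    intro i _
    exact ((dvd_pow_self a (Nat.succ_ne_zero i)).mul_left _).mul_right _
  have hGne : G ≠ 0 := by
    intro h
    rw [h] at hG
    push_cast at hG
    rcases mul_eq_zero.mp hG.symm with h1 | h2
    · exact hFx h1
    · exact absurd h2 (pow_ne_zero d hbq)
  have hGqne : (G : ℚ) ≠ 0 := by exact_mod_cast hGne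
  set q : ℚ := x ^ d / Polynomial.aeval x F with hq
  have hqeq : q = (a : ℚ) ^ d / (G : ℚ) := by
    rw [hq, hG, hxab, mul_pow, mul_div_mul_right _ _ (pow_ne_zero d hbq)]
  have hdq : ((q.den : ℤ) : ℚ) ≠ 0 := by exact_mod_cast q.den_nz
  have hkey : q.num * G = a ^ d * (q.den : ℤ) := by
    have h2 : q * (G : ℚ) = (a : ℚ) ^ d := by
      rw [hqeq, div_mul_cancel₀ _ hGqne]
    have h4 : (q.num : ℚ) = q * (q.den : ℚ) := by
      have := Rat.num_div_den q
      rw [div_eq_iff (by exact_mod_cast q.den_nz : ((q.den : ℚ)) ≠ 0)] at this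
      exact this
    have h3 : (q.num : ℚ) * (G : ℚ) = (a : ℚ) ^ d * (q.den : ℚ) := by
      rw [h4, ← h2]; ring
    exact_mod_cast h3
  have hpZ : Prime ((p : ℤ)) := Nat.prime_iff_prime_int.mp hp
  have hcopq : IsCoprime q.num ((q.den : ℤ)) := by
    rw [Int.isCoprime_iff_gcd_eq_one]
    exact q.reduced
  have hcopx : IsCoprime a b := by
    rw [Int.isCoprime_iff_gcd_eq_one]
    exact x.reduced
  constructor
  · intro h
    have hden : ¬ (p : ℤ) ∣ (q.den : ℤ) := fun hd' =>
      hpZ.not_unit (hcopq.isUnit_of_dvd' h hd')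
    have : (p : ℤ) ∣ a ^ d * (q.den : ℤ) := hkey ▸ Dvd.dvd.mul_right h G
    rcases hpZ.dvd_mul.mp this with h1 | h2
    · exact hpZ.dvd_of_dvd_pow h1
    · exact absurd h2 hden
  · intro h
    have hpb : ¬ (p : ℤ) ∣ b := fun hd' =>
      hpZ.not_unit (hcopx.isUnit_of_dvd' h hd')
    have hpG : ¬ (p : ℤ) ∣ G := by
      intro hd'
      have hb' : (p : ℤ) ∣ b ^ d := by
        have h2 : (p : ℤ) ∣ G - b ^ d := h.trans hGmod
        have := dvd_sub hd' h2
        simpa using this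
      exact hpb (hpZ.dvd_of_dvd_pow hb')
    have hpad : (p : ℤ) ∣ a ^ d * (q.den : ℤ) :=
      Dvd.dvd.mul_right (dvd_pow h (by omega)) _
    rw [← hkey] at hpad
    rcases hpZ.dvd_mul.mp hpad with h1 | h2
    · exact h1
    · exact absurd h2 hpG

theorem stmt3 (d : ℕ) (hd : 2 ≤ d) (F : Polynomial ℤ)
    (hdeg : F.natDegree ≤ d) (hF0 : F.coeff 0 = 1)
    (φ : ℚ → ℚ) (hφ : ∀ x : ℚ, φ x = x ^ d / Polynomial.aeval x F)
    (α : ℚ)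
    (hdef : ∀ n : ℕ, Polynomial.aeval (φ^[n] α) F ≠ 0)
    (hnz : ∀ n : ℕ, φ^[n] α ≠ 0) :
    (∀ n, 1 ≤ n → ∀ p : ℕ, p.Prime →
        ((p : ℤ) ∣ (φ^[n - 1] α).num ↔ (p : ℤ) ∣ α.num)) ∧
    (∀ n, 2 ≤ n → ¬ ∃ p : ℕ, p.Prime ∧ (p : ℤ) ∣ (φ^[n - 1] α).num ∧
        ∀ i, 1 ≤ i → i < n → ¬ (p : ℤ) ∣ (φ^[i - 1] α).num) := by
  have main : ∀ n, ∀ p : ℕ, p.Prime →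
      ((p : ℤ) ∣ (φ^[n] α).num ↔ (p : ℤ) ∣ α.num) := by
    intro n
    induction n with
    | zero => intro p hp; simp
    | succ n ih =>
      intro p hp
      rw [Function.iterate_succ_apply', hφ]
      rw [stmt3_key d (by omega) F hdeg hF0 (φ^[n] α) (hnz n) (hdef n) p hp]
      exact ih p hp
  constructor
  · intro n _ p hp
    exact main (n - 1) p hp
  · rintro n hn ⟨p, hp, hdvd, hprim⟩
    have h1 : (p : ℤ) ∣ α.num := (main (n - 1) p hp).mp hdvd
    exact hprim 1 le_rfl (by omega) (by simpa using h1)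
end

section
/- Let p be a prime and φ(z) = (a_e z^e + ⋯ + a_d z^d)/(b₀ + ⋯ + b_d z^d) with integer coefficients, 0 < e < d, p ∤ a_e b₀. Let α ∈ ℚ be such that all iterates φⁿ(α) are defined and nonzero, and let r = min{ n ≥ 0 : ord_p(φⁿ(α)) > 0 } (assumed finite). Then for all k ≥ r, ord_p(φᵏ(α)) = e^{k−r} · ord_p(φʳ(α)). -/
private lemma aux_sum_val_gt {p : ℕ} [Fact p.Prime] (c : ℤ) (S : Finset ℕ) (F : ℕ → ℚ)
    (h : ∀ i ∈ S, F i ≠ 0 → c < padicValRat p (F i)) :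
    (∑ i ∈ S, F i) ≠ 0 → c < padicValRat p (∑ i ∈ S, F i) := by
  classical
  induction S using Finset.induction with
  | empty => simp
  | @insert j S hni ih =>
    intro hsum
    rw [Finset.sum_insert hni] at hsum ⊢
    by_cases hj : F j = 0
    · rw [hj, zero_add] at hsum ⊢
      exact ih (fun i hi => h i (Finset.mem_insert_of_mem hi)) hsum
    by_cases hs : (∑ i ∈ S, F i) = 0
    · rw [hs, add_zero] at hsum ⊢
      exact h j (Finset.mem_insert_self j S) hj
    · have h1 : c < padicValRat p (F j) := h j (Finset.mem_insert_self j S) hj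
      have h2 : c < padicValRat p (∑ i ∈ S, F i) :=
        ih (fun i hi => h i (Finset.mem_insert_of_mem hi)) hs
      calc c < min (padicValRat p (F j)) (padicValRat p (∑ i ∈ S, F i)) := lt_min h1 h2
        _ ≤ _ := padicValRat.min_le_padicValRat_add hsum

private lemma aux_step {p : ℕ} [Fact p.Prime] {e d : ℕ} (he : 0 < e) (hed : e < d)
    {a b : ℕ → ℤ} (hae : ¬ (p : ℤ) ∣ a e) (hb0 : ¬ (p : ℤ) ∣ b 0)
    {x y : ℚ} (hx : x ≠ 0) (hy : y ≠ 0)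
    (hD : (∑ i ∈ Finset.range (d + 1), (b i : ℚ) * x ^ i) ≠ 0)
    (hxy : y = (∑ i ∈ Finset.Icc e d, (a i : ℚ) * x ^ i)
            / (∑ i ∈ Finset.range (d + 1), (b i : ℚ) * x ^ i))
    (hv : 0 < padicValRat p x) :
    padicValRat p y = (e : ℤ) * padicValRat p x := by
  classical
  set v := padicValRat p x with hvdef
  have hae0 : a e ≠ 0 := fun h => hae (h ▸ dvd_zero _)
  have hb00 : b 0 ≠ 0 := fun h => hb0 (h ▸ dvd_zero _)
  -- valuation of a general term a_i * x^i (when nonzero) is ≥ i*v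
  have hterm : ∀ (c : ℤ) (i : ℕ), (c : ℚ) * x ^ i ≠ 0 →
      (i : ℤ) * v ≤ padicValRat p ((c : ℚ) * x ^ i) := by
    intro c i hne
    have hc : (c : ℚ) ≠ 0 := fun h => hne (by rw [h, zero_mul])
    have hxi : x ^ i ≠ 0 := pow_ne_zero _ hx
    rw [padicValRat.mul hc hxi, padicValRat.pow x]
    have : (0 : ℤ) ≤ padicValRat p (c : ℚ) := by
      rw [@padicValRat.of_int p c]
      exact Int.ofNat_nonneg _
    linarith
  -- numerator
  have hN : (∑ i ∈ Finset.Icc e d, (a i : ℚ) * x ^ i) ≠ 0 := by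
    intro h
    rw [hxy, h, zero_div] at hy
    exact hy rfl
  have hvae : padicValRat p ((a e : ℚ) * x ^ e) = (e : ℤ) * v := by
    rw [padicValRat.mul (by exact_mod_cast hae0) (pow_ne_zero _ hx), padicValRat.pow x,
      @padicValRat.of_int p (a e), padicValInt.eq_zero_of_not_dvd hae]
    ring
  have hsplit : (∑ i ∈ Finset.Icc e d, (a i : ℚ) * x ^ i)
      = (a e : ℚ) * x ^ e + ∑ i ∈ Finset.Icc (e + 1) d, (a i : ℚ) * x ^ i := by
    have hins : Finset.Icc e d = insert e (Finset.Icc (e + 1) d) := by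
      ext i; simp [Finset.mem_Icc, Finset.mem_insert]; omega
    rw [hins, Finset.sum_insert (by simp [Finset.mem_Icc])]
  have hvN : padicValRat p (∑ i ∈ Finset.Icc e d, (a i : ℚ) * x ^ i) = (e : ℤ) * v := by
    rw [hsplit]
    by_cases hS : (∑ i ∈ Finset.Icc (e + 1) d, (a i : ℚ) * x ^ i) = 0
    · rw [hS, add_zero, hvae]
    · have hSlt : (e : ℤ) * v < padicValRat p (∑ i ∈ Finset.Icc (e + 1) d, (a i : ℚ) * x ^ i) := by
        apply aux_sum_val_gt _ _ _ _ hS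
        intro i hi hne
        have hie : e + 1 ≤ i := (Finset.mem_Icc.mp hi).1
        have := hterm (a i) i hne
        have : ((e : ℤ) + 1) * v ≤ padicValRat p ((a i : ℚ) * x ^ i) := by
          refine le_trans ?_ this
          have : ((e : ℤ) + 1) ≤ (i : ℤ) := by exact_mod_cast hie
          nlinarith
        nlinarith
      have hsum : (a e : ℚ) * x ^ e + ∑ i ∈ Finset.Icc (e + 1) d, (a i : ℚ) * x ^ i ≠ 0 := by
        rw [← hsplit]; exact hN
      rw [padicValRat.add_eq_of_lt hsum (by
        exact mul_ne_zero (by exact_mod_cast hae0) (pow_ne_zero _ hx)) hS (by rw [hvae]; exact hSlt),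
        hvae]
  -- denominator
  have hvb0 : padicValRat p ((b 0 : ℚ) * x ^ 0) = 0 := by
    rw [pow_zero, mul_one, @padicValRat.of_int p (b 0), padicValInt.eq_zero_of_not_dvd hb0]
    norm_num
  have hsplitD : (∑ i ∈ Finset.range (d + 1), (b i : ℚ) * x ^ i)
      = (b 0 : ℚ) * x ^ 0 + ∑ i ∈ Finset.Icc 1 d, (b i : ℚ) * x ^ i := by
    have : Finset.range (d + 1) = insert 0 (Finset.Icc 1 d) := by
      ext i
      simp [Nat.lt_succ_iff, Nat.one_le_iff_ne_zero]
      omega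
    rw [this, Finset.sum_insert (by simp)]
  have hvD : padicValRat p (∑ i ∈ Finset.range (d + 1), (b i : ℚ) * x ^ i) = 0 := by
    rw [hsplitD]
    by_cases hS : (∑ i ∈ Finset.Icc 1 d, (b i : ℚ) * x ^ i) = 0
    · rw [hS, add_zero, hvb0]
    · have hSlt : (0 : ℤ) < padicValRat p (∑ i ∈ Finset.Icc 1 d, (b i : ℚ) * x ^ i) := by
        apply aux_sum_val_gt _ _ _ _ hS
        intro i hi hne
        have hie : 1 ≤ i := (Finset.mem_Icc.mp hi).1
        have := hterm (b i) i hne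
        have h1 : (1 : ℤ) ≤ (i : ℤ) := by exact_mod_cast hie
        nlinarith
      have hsum : (b 0 : ℚ) * x ^ 0 + ∑ i ∈ Finset.Icc 1 d, (b i : ℚ) * x ^ i ≠ 0 := by
        rw [← hsplitD]; exact hD
      rw [padicValRat.add_eq_of_lt hsum (by
        simp only [pow_zero, mul_one]; exact_mod_cast hb00) hS (by rw [hvb0]; exact hSlt), hvb0]
  rw [hxy, padicValRat.div hN hD, hvN, hvD, sub_zero]

theorem stmt6 (p : ℕ) (hp : p.Prime) (e d : ℕ) (he : 0 < e) (hed : e < d)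
    (a b : ℕ → ℤ) (hae : a e ≠ 0) (hb0 : b 0 ≠ 0)
    (hgood : ¬ (p : ℤ) ∣ a e * b 0)
    (φ : ℚ → ℚ)
    (hφ : ∀ x : ℚ, φ x = (∑ i ∈ Finset.Icc e d, (a i : ℚ) * x ^ i)
            / (∑ i ∈ Finset.range (d + 1), (b i : ℚ) * x ^ i))
    (α : ℚ)
    (hdef : ∀ n : ℕ, (∑ i ∈ Finset.range (d + 1), (b i : ℚ) * (φ^[n] α) ^ i) ≠ 0)
    (hnz : ∀ n : ℕ, φ^[n] α ≠ 0)
    (r : ℕ) (hr : 0 < padicValRat p (φ^[r] α))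
    (hrmin : ∀ m < r, ¬ 0 < padicValRat p (φ^[m] α)) :
    ∀ k, r ≤ k → padicValRat p (φ^[k] α) = (e : ℤ) ^ (k - r) * padicValRat p (φ^[r] α) := by
  haveI : Fact p.Prime := ⟨hp⟩
  have hpae : ¬ (p : ℤ) ∣ a e := fun h => hgood (h.mul_right _)
  have hpb0 : ¬ (p : ℤ) ∣ b 0 := fun h => hgood (h.mul_left _)
  have key : ∀ j : ℕ, padicValRat p (φ^[r + j] α) = (e : ℤ) ^ j * padicValRat p (φ^[r] α) := by
    intro j
    induction j with
    | zero => simp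
    | succ j ih =>
      have hpos : 0 < padicValRat p (φ^[r + j] α) := by
        rw [ih]
        have : (0 : ℤ) < (e : ℤ) ^ j := pow_pos (by exact_mod_cast he) j
        positivity
      have hiter : φ^[r + (j + 1)] α = φ (φ^[r + j] α) := by
        rw [← Nat.add_assoc, Function.iterate_succ_apply']
      have := aux_step (p := p) (y := φ^[r + (j + 1)] α) he hed hpae hpb0 (hnz (r + j))
        (hnz (r + (j + 1))) (hdef (r + j))
        (by rw [hiter, hφ]) hpos
      rw [hiter] at this
      rw [hiter, this, ih, pow_succ]
      ring
  intro k hk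
  have := key (k - r)
  rwa [Nat.add_sub_cancel' hk] at this
end

section
/- Let φ: X → X, γ ∈ X with φᵏ(γ) = γ, k ≥ 2, and let ≡ be an equivalence relation compatible with φ such that φⁱ(γ) ≢ γ for all 1 ≤ i < k. Then for any α ∈ X, the set of residues i ∈ {0, 1, …, k−1} for which there exists n ≥ 0 with φ^{nk+i}(α) ≡ γ contains at most one element. -/
theorem stmt12 {X : Type*} (φ : X → X) (γ : X) (k : ℕ) (hk : 2 ≤ k)
    (hγ : φ^[k] γ = γ) (r : X → X → Prop) (hequiv : Equivalence r)
    (hcompat : ∀ x y, r x y → r (φ x) (φ y))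
    (hper : ∀ i, 1 ≤ i → i < k → ¬ r (φ^[i] γ) γ)
    (α : X) :
    ∀ i j, i < k → j < k →
      (∃ n : ℕ, r (φ^[n * k + i] α) γ) → (∃ n : ℕ, r (φ^[n * k + j] α) γ) →
      i = j := by
  have hcomp : ∀ t x y, r x y → r (φ^[t] x) (φ^[t] y) := by
    intro t
    induction t with
    | zero => intro x y h; simpa using h
    | succ s ih =>
      intro x y h
      have := hcompat _ _ (ih x y h)
      simpa [Function.iterate_succ_apply'] using this
  have hfix : ∀ m, φ^[m * k] γ = γ := by
    intro m
    rw [Nat.mul_comm, Function.iterate_mul]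
    exact Function.iterate_fixed hγ m
  have key : ∀ i j, i ≤ j → i < k → j < k →
      (∃ n, r (φ^[n * k + i] α) γ) → (∃ n, r (φ^[n * k + j] α) γ) → i = j := by
    intro i j hij hi hj h1 h2
    obtain ⟨n, hn⟩ := h1
    obtain ⟨m, hm⟩ := h2
    by_contra hne
    have h1 : r (φ^[(j - i) + m * k] (φ^[n * k + i] α)) (φ^[(j - i) + m * k] γ) :=
      hcomp _ _ _ hn
    have h2 : r (φ^[n * k] (φ^[m * k + j] α)) (φ^[n * k] γ) := hcomp _ _ _ hm
    rw [← Function.iterate_add_apply] at h1 h2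
    have e1 : (j - i) + m * k + (n * k + i) = (n + m) * k + j := by
      have h := Nat.add_mul n m k
      omega
    have e2 : n * k + (m * k + j) = (n + m) * k + j := by
      have h := Nat.add_mul n m k
      omega
    rw [e1] at h1
    rw [e2] at h2
    have hg1 : φ^[(j - i) + m * k] γ = φ^[j - i] γ := by
      rw [Function.iterate_add_apply, hfix]
    rw [hg1] at h1
    rw [hfix n] at h2
    exact hper (j - i) (by omega) (by omega) (hequiv.trans (hequiv.symm h1) h2)
  intro i j hi hj h1 h2
  rcases le_total i j with h | h
  · exact key i j h hi hj h1 h2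
  · exact (key j i h hj hi h2 h1).symm
end
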